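/- Converse spectral gap implication: if G has degrees 3 ≤ D(x) ≤ D and the spectrum of S*²S² on ℓ²_o(B,U) (respectively ℓ²(B,U) in the infinite case) is contained in [0, 1−c], then the spectrum of P² on ℓ²_o(V,π) (resp. ℓ²(V,π)) is contained in [0, 1 − D^{−2}c]. Concretely: for any f with Σ f(x)D(x)=0, letting G(e) = f(t(e)), one has ⟨G, (I − S*²S²)G⟩_{ℓ²(B,U)} ≤ D² ⟨f, (I − P²)f⟩_{ℓ²(V,π)}. -/

import Mathlib

open Finset Matrix

/-- The random-walk laplacian `P f x = (1/D(x)) ∑_{y ∼ x} f y`. -/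
noncomputable def lapP {V : Type*} [Fintype V] [DecidableEq V]
    (G : SimpleGraph V) [DecidableRel G.Adj] (f : V → ℂ) (x : V) : ℂ :=
  ((G.degree x : ℂ))⁻¹ * ∑ y ∈ G.neighborFinset x, f y

/-- The matrix (real entries) of the non-backtracking transfer operator `S`. -/
noncomputable def Smat {V : Type*} [Fintype V] [DecidableEq V]
    (G : SimpleGraph V) [DecidableRel G.Adj] : Matrix G.Dart G.Dart ℝ :=
  fun e e' => if e'.snd = e.fst ∧ e'.symm ≠ e then ((G.degree e.fst : ℝ) - 1)⁻¹ else 0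

/-- The matrix of `S*²S²`, `S*` the `ℓ²(B,U)`-adjoint (transpose) of `S`. -/
noncomputable def SstarSqSq {V : Type*} [Fintype V] [DecidableEq V]
    (G : SimpleGraph V) [DecidableRel G.Adj] : Matrix G.Dart G.Dart ℝ :=
  (Smat G)ᵀ * (Smat G)ᵀ * (Smat G * Smat G)

open SimpleGraph Complex

section Helpers
set_option linter.unusedSectionVars false
variable {V : Type*} [Fintype V] [DecidableEq V] (G : SimpleGraph V) [DecidableRel G.Adj]

def dartEquivCSG : (Σ v : V, G.neighborSet v) ≃ G.Dart where
  toFun s := ⟨(s.fst, s.snd), s.snd.property⟩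
  invFun d := ⟨d.fst, d.snd, d.adj⟩
  left_inv s := by ext <;> simp
  right_inv d := by ext <;> simp

lemma sum_dart_csg {M : Type*} [AddCommMonoid M] (g : V → V → M) :
    ∑ e : G.Dart, g e.fst e.snd = ∑ x : V, ∑ y ∈ G.neighborFinset x, g x y := by
  rw [← Fintype.sum_equiv (dartEquivCSG G) _ (fun s => g s.fst s.snd) (fun s => rfl)]
  rw [← Finset.univ_sigma_univ, Finset.sum_sigma]
  refine Finset.sum_congr rfl fun x _ => ?_
  rw [SimpleGraph.neighborFinset_def]
  exact Finset.sum_set_coe (f := fun y => g x y) (s := G.neighborSet x)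

lemma sum_dart_symm_csg {M : Type*} [AddCommMonoid M] (g : V → V → M) :
    ∑ e : G.Dart, g e.fst e.snd = ∑ e : G.Dart, g e.snd e.fst :=
  Fintype.sum_equiv ((Dart.symm_involutive (G := G)).toPerm _) _ _ (fun e => rfl)

lemma S_row (e : G.Dart) (h : V → V → ℂ) :
    ∑ e' : G.Dart, (Smat G e e' : ℂ) * h e'.fst e'.snd
      = (((G.degree e.fst : ℝ) - 1 : ℝ)⁻¹ : ℂ) *
          ∑ y ∈ (G.neighborFinset e.fst).erase e.snd, h y e.fst := by
  set c : ℂ := (((G.degree e.fst : ℝ) - 1 : ℝ)⁻¹ : ℂ) with hc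
  have step1 : ∀ e' : G.Dart, (Smat G e e' : ℂ) * h e'.fst e'.snd
      = (if e'.snd = e.fst ∧ (e'.snd, e'.fst) ≠ e.toProd then c else 0) * h e'.fst e'.snd := by
    intro e'
    have hiff : (e'.snd = e.fst ∧ e'.symm ≠ e) ↔
        (e'.snd = e.fst ∧ (e'.snd, e'.fst) ≠ e.toProd) := by
      apply and_congr_right'
      rw [ne_eq, ne_eq, Dart.ext_iff, Dart.symm_toProd]
      constructor
      · intro hne hp; exact hne (by rw [← hp]; rfl)
      · intro hne hp; exact hne (by rw [← hp]; rfl)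
    simp only [Smat, hiff]
    rw [apply_ite (fun r : ℝ => (r : ℂ)), hc]
    push_cast
    rfl
  calc ∑ e' : G.Dart, (Smat G e e' : ℂ) * h e'.fst e'.snd
      = ∑ e' : G.Dart, (fun x y =>
          (if x = e.fst ∧ (x, y) ≠ e.toProd then c else 0) * h y x) e'.fst e'.snd :=
        Fintype.sum_equiv ((Dart.symm_involutive (G := G)).toPerm _) _ _ (fun e' => step1 e')
    _ = ∑ x : V, ∑ y ∈ G.neighborFinset x, (fun x y =>
          (if x = e.fst ∧ (x, y) ≠ e.toProd then c else 0) * h y x) x y := by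
          exact sum_dart_csg G (fun x y => (if x = e.fst ∧ (x, y) ≠ e.toProd then c else 0) * h y x)
    _ = c * ∑ y ∈ (G.neighborFinset e.fst).erase e.snd, h y e.fst := by
        rw [Finset.sum_eq_single e.fst]
        · rw [Finset.mul_sum, ← Finset.filter_ne' (G.neighborFinset e.fst) e.snd,
            Finset.sum_filter]
          refine Finset.sum_congr rfl fun y _ => ?_
          show (if e.fst = e.fst ∧ (e.fst, y) ≠ e.toProd then c else 0) * h y e.fst
              = if y ≠ e.snd then c * h y e.fst else 0
          by_cases hy : y = e.snd
          · subst hy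
            rw [if_neg (fun hc => hc.2 rfl), if_neg (fun hc => hc rfl), zero_mul]
          · rw [if_pos ⟨rfl, fun hp => hy (congrArg Prod.snd hp)⟩, if_pos hy]
        · intro x _ hx
          apply Finset.sum_eq_zero; intro y _
          beta_reduce
          rw [if_neg, zero_mul]; exact fun hh => hx hh.1
        · intro hx; exact absurd (Finset.mem_univ e.fst) hx
end Helpers

section Helpers2
set_option linter.unusedSectionVars false
variable {V : Type*} [Fintype V] [DecidableEq V] (G : SimpleGraph V) [DecidableRel G.Adj]

lemma deg_sub_one_ne {x : V} (h3 : 3 ≤ G.degree x) : ((G.degree x : ℂ) - 1) ≠ 0 := by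
  rw [sub_ne_zero]
  exact_mod_cast (by omega : G.degree x ≠ 1)

lemma S_apply_head (hdeg3 : ∀ x, 3 ≤ G.degree x) (f : V → ℂ) (e : G.Dart) :
    ∑ e' : G.Dart, (Smat G e e' : ℂ) * f e'.snd = f e.fst := by
  have h := S_row G e (fun _ w => f w)
  rw [h, Finset.sum_const,
    Finset.card_erase_of_mem (by rw [SimpleGraph.mem_neighborFinset]; exact e.adj),
    SimpleGraph.card_neighborFinset_eq_degree, nsmul_eq_mul,
    Nat.cast_sub (by have := hdeg3 e.fst; omega : 1 ≤ G.degree e.fst)]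
  push_cast
  rw [← mul_assoc, inv_mul_cancel₀ (deg_sub_one_ne G (hdeg3 e.fst)), one_mul]

lemma S_apply_tail (hdeg3 : ∀ x, 3 ≤ G.degree x) (f : V → ℂ) (e : G.Dart) :
    ∑ e' : G.Dart, (Smat G e e' : ℂ) * f e'.fst
      = ((G.degree e.fst : ℂ) - 1)⁻¹ * ((G.degree e.fst : ℂ) * lapP G f e.fst - f e.snd) := by
  have h := S_row G e (fun z _ => f z)
  rw [h]
  have hmem : e.snd ∈ G.neighborFinset e.fst := by
    rw [SimpleGraph.mem_neighborFinset]; exact e.adj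
  have herase : ∑ y ∈ (G.neighborFinset e.fst).erase e.snd, f y
      = (∑ y ∈ G.neighborFinset e.fst, f y) - f e.snd :=
    eq_sub_of_add_eq' (Finset.add_sum_erase _ f hmem)
  have hdsum : (G.degree e.fst : ℂ) * lapP G f e.fst = ∑ y ∈ G.neighborFinset e.fst, f y := by
    rw [lapP, ← mul_assoc, mul_inv_cancel₀
      (by exact_mod_cast (by have := hdeg3 e.fst; omega : G.degree e.fst ≠ 0)), one_mul]
  rw [herase, hdsum]
  push_cast
  rfl
end Helpers2

section Helpers3
set_option linter.unusedSectionVars false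
variable {V : Type*} [Fintype V] [DecidableEq V] (G : SimpleGraph V) [DecidableRel G.Adj]

lemma quadform {ι : Type*} [Fintype ι] (M : Matrix ι ι ℝ) (φ : ι → ℂ) :
    (∑ e, (starRingEnd ℂ) (φ e) * ∑ e', (((Mᵀ * M) e e' : ℝ) : ℂ) * φ e').re
      = ∑ j, Complex.normSq (∑ e, ((M j e : ℝ) : ℂ) * φ e) := by
  set ψ : ι → ℂ := fun j => ∑ e, ((M j e : ℝ) : ℂ) * φ e with hψ
  have h1 : ∀ e, (∑ e', (((Mᵀ * M) e e' : ℝ) : ℂ) * φ e') = ∑ j, ((M j e : ℝ) : ℂ) * ψ j := by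
    intro e
    have hm : ∀ e', (((Mᵀ * M) e e' : ℝ) : ℂ)
        = ∑ j, ((M j e : ℝ) : ℂ) * ((M j e' : ℝ) : ℂ) := by
      intro e'; rw [Matrix.mul_apply]; push_cast [Matrix.transpose_apply]; rfl
    calc ∑ e', (((Mᵀ * M) e e' : ℝ) : ℂ) * φ e'
        = ∑ e', ∑ j, ((M j e : ℝ) : ℂ) * ((M j e' : ℝ) : ℂ) * φ e' := by
          refine Finset.sum_congr rfl fun e' _ => ?_; rw [hm e', Finset.sum_mul]
      _ = ∑ j, ((M j e : ℝ) : ℂ) * ψ j := by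
          rw [Finset.sum_comm]
          refine Finset.sum_congr rfl fun j _ => ?_
          simp only [hψ]; rw [Finset.mul_sum]
          refine Finset.sum_congr rfl fun e' _ => ?_; ring
  have key : ∑ e, (starRingEnd ℂ) (φ e) * ∑ e', (((Mᵀ * M) e e' : ℝ) : ℂ) * φ e'
      = ∑ j, ((Complex.normSq (ψ j) : ℝ) : ℂ) := by
    calc ∑ e, (starRingEnd ℂ) (φ e) * ∑ e', (((Mᵀ * M) e e' : ℝ) : ℂ) * φ e'
        = ∑ e, ∑ j, ((M j e : ℝ) : ℂ) * ((starRingEnd ℂ) (φ e) * ψ j) := by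
          refine Finset.sum_congr rfl fun e _ => ?_
          rw [h1 e, Finset.mul_sum]
          refine Finset.sum_congr rfl fun j _ => ?_; ring
      _ = ∑ j, (starRingEnd ℂ) (ψ j) * ψ j := by
          rw [Finset.sum_comm]
          refine Finset.sum_congr rfl fun j _ => ?_
          have hconj : (starRingEnd ℂ) (ψ j) = ∑ e, ((M j e : ℝ) : ℂ) * (starRingEnd ℂ) (φ e) := by
            simp only [hψ, map_sum]
            refine Finset.sum_congr rfl fun e _ => ?_
            rw [RingHom.map_mul, Complex.conj_ofReal]
          rw [hconj, Finset.sum_mul]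
          refine Finset.sum_congr rfl fun e _ => ?_; ring
      _ = ∑ j, ((Complex.normSq (ψ j) : ℝ) : ℂ) := by
          refine Finset.sum_congr rfl fun j _ => ?_
          rw [mul_comm, Complex.mul_conj]
  rw [key, Complex.re_sum]
  exact Finset.sum_congr rfl fun j _ => Complex.ofReal_re _

lemma SqS_apply (hdeg3 : ∀ x, 3 ≤ G.degree x) (f : V → ℂ) (e : G.Dart) :
    ∑ e' : G.Dart, (((Smat G * Smat G) e e' : ℝ) : ℂ) * f e'.snd
      = ((G.degree e.fst : ℂ) - 1)⁻¹ * ((G.degree e.fst : ℂ) * lapP G f e.fst - f e.snd) := by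
  have hm : ∀ e', (((Smat G * Smat G) e e' : ℝ) : ℂ)
      = ∑ k, ((Smat G e k : ℝ) : ℂ) * ((Smat G k e' : ℝ) : ℂ) := by
    intro e'; rw [Matrix.mul_apply]; push_cast; rfl
  calc ∑ e', (((Smat G * Smat G) e e' : ℝ) : ℂ) * f e'.snd
      = ∑ e', ∑ k, ((Smat G e k : ℝ) : ℂ) * ((Smat G k e' : ℝ) : ℂ) * f e'.snd := by
        refine Finset.sum_congr rfl fun e' _ => ?_; rw [hm e', Finset.sum_mul]
    _ = ∑ k, ((Smat G e k : ℝ) : ℂ) * ∑ e', ((Smat G k e' : ℝ) : ℂ) * f e'.snd := by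
        rw [Finset.sum_comm]
        refine Finset.sum_congr rfl fun k _ => ?_
        rw [Finset.mul_sum]
        refine Finset.sum_congr rfl fun e' _ => ?_; ring
    _ = ∑ k, ((Smat G e k : ℝ) : ℂ) * f k.fst := by
        refine Finset.sum_congr rfl fun k _ => ?_; rw [S_apply_head G hdeg3 f k]
    _ = _ := S_apply_tail G hdeg3 f e

lemma SstarSqSq_eq : SstarSqSq G = (Smat G * Smat G)ᵀ * (Smat G * Smat G) := by
  rw [SstarSqSq, Matrix.transpose_mul]
end Helpers3

section Helpers4
set_option linter.unusedSectionVars false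
variable {V : Type*} [Fintype V] [DecidableEq V] (G : SimpleGraph V) [DecidableRel G.Adj]

lemma key_real (d Dv a2 s : ℝ) (hd : 3 ≤ d) (hD : d ≤ Dv) (ha2 : 0 ≤ a2) (hs : 0 ≤ s)
    (hcs : d * a2 ≤ s) :
    Dv ^ 2 * (d * a2) - ((d - 1) * (d - 1))⁻¹ * (d ^ 3 * a2 - 2 * d ^ 2 * a2 + s)
      ≤ (Dv ^ 2 - 1) * s := by
  have hu : (0 : ℝ) < (d - 1) * (d - 1) := by nlinarith
  rw [inv_mul_eq_div, sub_le_iff_le_add', ← sub_le_iff_le_add, le_div_iff₀ hu]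
  have hDd : d ^ 2 ≤ Dv ^ 2 := by nlinarith
  have h4 : (4:ℝ) ≤ (d - 1) ^ 2 := by nlinarith
  have hm : d ^ 2 * 4 ≤ Dv ^ 2 * (d - 1) ^ 2 :=
    mul_le_mul hDd h4 (by norm_num) (by positivity)
  have hcoef : (0:ℝ) ≤ Dv ^ 2 * (d - 1) ^ 2 - d * (d - 2) := by nlinarith
  nlinarith [mul_nonneg (sub_nonneg.2 hcs) hcoef]

lemma cs_bound (f : V → ℂ) (x : V) :
    Complex.normSq (∑ y ∈ G.neighborFinset x, f y)
      ≤ (G.degree x : ℝ) * ∑ y ∈ G.neighborFinset x, Complex.normSq (f y) := by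
  have h1 : ‖∑ y ∈ G.neighborFinset x, f y‖ ≤ ∑ y ∈ G.neighborFinset x, ‖f y‖ :=
    norm_sum_le _ _
  have h2 : (∑ y ∈ G.neighborFinset x, ‖f y‖) ^ 2
      ≤ (G.degree x : ℝ) * ∑ y ∈ G.neighborFinset x, ‖f y‖ ^ 2 := by
    have := sq_sum_le_card_mul_sum_sq (s := G.neighborFinset x) (f := fun y => ‖f y‖)
    simpa [SimpleGraph.card_neighborFinset_eq_degree] using this
  have h3 : Complex.normSq (∑ y ∈ G.neighborFinset x, f y)
      = ‖∑ y ∈ G.neighborFinset x, f y‖ ^ 2 := (Complex.sq_norm _).symm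
  rw [h3]
  calc ‖∑ y ∈ G.neighborFinset x, f y‖ ^ 2 ≤ (∑ y ∈ G.neighborFinset x, ‖f y‖) ^ 2 := by
        apply pow_le_pow_left₀ (norm_nonneg _) h1
    _ ≤ (G.degree x : ℝ) * ∑ y ∈ G.neighborFinset x, ‖f y‖ ^ 2 := h2
    _ = (G.degree x : ℝ) * ∑ y ∈ G.neighborFinset x, Complex.normSq (f y) := by
        congr 1; exact Finset.sum_congr rfl fun y _ => (Complex.sq_norm _)

lemma deg_mul_lapP (hdeg3 : ∀ x, 3 ≤ G.degree x) (f : V → ℂ) (x : V) :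
    (G.degree x : ℂ) * lapP G f x = ∑ y ∈ G.neighborFinset x, f y := by
  rw [lapP, ← mul_assoc, mul_inv_cancel₀
    (by exact_mod_cast (by have := hdeg3 x; omega : G.degree x ≠ 0)), one_mul]

lemma inner_sum_normSq (hdeg3 : ∀ x, 3 ≤ G.degree x) (f : V → ℂ) (x : V) :
    ∑ y ∈ G.neighborFinset x, Complex.normSq ((G.degree x : ℂ) * lapP G f x - f y)
      = (G.degree x : ℝ) ^ 3 * Complex.normSq (lapP G f x)
        - 2 * (G.degree x : ℝ) ^ 2 * Complex.normSq (lapP G f x)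
        + ∑ y ∈ G.neighborFinset x, Complex.normSq (f y) := by
  set c : ℂ := (G.degree x : ℂ) * lapP G f x with hc
  have hnc : Complex.normSq c = (G.degree x : ℝ) ^ 2 * Complex.normSq (lapP G f x) := by
    rw [hc, Complex.normSq_mul, Complex.normSq_natCast]; ring
  have hsum : ∑ y ∈ G.neighborFinset x, f y = c := (deg_mul_lapP G hdeg3 f x).symm
  calc ∑ y ∈ G.neighborFinset x, Complex.normSq (c - f y)
      = ∑ y ∈ G.neighborFinset x,
          (Complex.normSq c + Complex.normSq (f y) - 2 * (c * (starRingEnd ℂ) (f y)).re) := by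
        exact Finset.sum_congr rfl fun y _ => Complex.normSq_sub c (f y)
    _ = (G.degree x : ℝ) * Complex.normSq c + ∑ y ∈ G.neighborFinset x, Complex.normSq (f y)
        - 2 * (c * (starRingEnd ℂ) c).re := by
        rw [Finset.sum_sub_distrib, Finset.sum_add_distrib, Finset.sum_const,
          SimpleGraph.card_neighborFinset_eq_degree, nsmul_eq_mul]
        congr 1
        rw [← Finset.mul_sum, ← Complex.re_sum, ← Finset.mul_sum, ← map_sum, hsum]
    _ = _ := by
        rw [Complex.mul_conj, Complex.ofReal_re, hnc]; ring
end Helpers4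

section Helpers5
set_option linter.unusedSectionVars false
variable {V : Type*} [Fintype V] [DecidableEq V] (G : SimpleGraph V) [DecidableRel G.Adj]

lemma sum_dart_head {M : Type*} [AddCommMonoid M] (g : V → M) :
    ∑ e : G.Dart, g e.snd = ∑ x : V, (G.degree x) • g x :=
  calc ∑ e : G.Dart, g e.snd = ∑ e : G.Dart, g e.fst :=
        (sum_dart_symm_csg G (fun z _ => g z)).symm
    _ = ∑ x : V, ∑ _y ∈ G.neighborFinset x, g x := sum_dart_csg G (fun z _ => g z)
    _ = ∑ x : V, (G.degree x) • g x := by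
        refine Finset.sum_congr rfl fun x _ => ?_
        rw [Finset.sum_const, SimpleGraph.card_neighborFinset_eq_degree]

lemma norm_sq_eq_normSq (z : ℂ) : ‖z‖ ^ 2 = Complex.normSq z := by
  rw [Complex.sq_norm]

lemma conj_mul_self_re (z : ℂ) : ((starRingEnd ℂ) z * z).re = Complex.normSq z := by
  rw [mul_comm, Complex.mul_conj, Complex.ofReal_re]

lemma Asum (f : V → ℂ) :
    (∑ x : V, (starRingEnd ℂ) (f x) * f x * (G.degree x : ℂ)).re
      = ∑ x : V, (G.degree x : ℝ) * Complex.normSq (f x) := by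
  rw [Complex.re_sum]
  refine Finset.sum_congr rfl fun x _ => ?_
  rw [mul_comm ((starRingEnd ℂ) (f x)) (f x), Complex.mul_conj, ← Complex.ofReal_natCast,
    ← Complex.ofReal_mul, Complex.ofReal_re, mul_comm]

lemma Adart (f : V → ℂ) :
    ∑ e : G.Dart, Complex.normSq (f e.snd) = ∑ x : V, (G.degree x : ℝ) * Complex.normSq (f x) := by
  rw [sum_dart_head G (fun x => Complex.normSq (f x))]
  refine Finset.sum_congr rfl fun x _ => ?_
  rw [nsmul_eq_mul]

lemma Bsum (hdeg3 : ∀ x, 3 ≤ G.degree x) (f : V → ℂ) :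
    (∑ x : V, (starRingEnd ℂ) (f x) * lapP G (lapP G f) x * (G.degree x : ℂ)).re
      = ∑ x : V, (G.degree x : ℝ) * Complex.normSq (lapP G f x) := by
  have step1 : ∀ x : V, (starRingEnd ℂ) (f x) * lapP G (lapP G f) x * (G.degree x : ℂ)
      = ∑ y ∈ G.neighborFinset x, (starRingEnd ℂ) (f x) * lapP G f y := by
    intro x
    rw [mul_assoc, mul_comm (lapP G (lapP G f) x), deg_mul_lapP G hdeg3 (lapP G f) x,
      Finset.mul_sum]
  calc (∑ x : V, (starRingEnd ℂ) (f x) * lapP G (lapP G f) x * (G.degree x : ℂ)).re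
      = (∑ x : V, ∑ y ∈ G.neighborFinset x, (starRingEnd ℂ) (f x) * lapP G f y).re := by
        rw [Finset.sum_congr rfl fun x _ => step1 x]
    _ = (∑ e : G.Dart, (starRingEnd ℂ) (f e.fst) * lapP G f e.snd).re := by
        rw [sum_dart_csg G (fun x y => (starRingEnd ℂ) (f x) * lapP G f y)]
    _ = (∑ e : G.Dart, (starRingEnd ℂ) (f e.snd) * lapP G f e.fst).re := by
        rw [sum_dart_symm_csg G (fun x y => (starRingEnd ℂ) (f x) * lapP G f y)]
    _ = (∑ x : V, ∑ y ∈ G.neighborFinset x, (starRingEnd ℂ) (f y) * lapP G f x).re := by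
        rw [sum_dart_csg G (fun x y => (starRingEnd ℂ) (f y) * lapP G f x)]
    _ = (∑ x : V, (G.degree x : ℂ) * ((starRingEnd ℂ) (lapP G f x) * lapP G f x)).re := by
        refine congrArg Complex.re (Finset.sum_congr rfl fun x _ => ?_)
        rw [← Finset.sum_mul, ← map_sum, ← deg_mul_lapP G hdeg3 f x, RingHom.map_mul,
          Complex.conj_natCast]
        ring
    _ = ∑ x : V, (G.degree x : ℝ) * Complex.normSq (lapP G f x) := by
        rw [Complex.re_sum]
        refine Finset.sum_congr rfl fun x _ => ?_
        rw [mul_comm ((starRingEnd ℂ) (lapP G f x)), Complex.mul_conj,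
          ← Complex.ofReal_natCast, ← Complex.ofReal_mul, Complex.ofReal_re]

lemma Nsum (hdeg3 : ∀ x, 3 ≤ G.degree x) (f : V → ℂ) :
    (∑ e : G.Dart, (starRingEnd ℂ) (f e.snd) *
        ∑ e' : G.Dart, ((SstarSqSq G e e' : ℝ) : ℂ) * f e'.snd).re
      = ∑ e : G.Dart, Complex.normSq (((G.degree e.fst : ℂ) - 1)⁻¹ *
          ((G.degree e.fst : ℂ) * lapP G f e.fst - f e.snd)) := by
  have h := quadform (Smat G * Smat G) (fun e => f e.snd)
  rw [← SstarSqSq_eq G] at h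
  rw [h]
  exact Finset.sum_congr rfl fun e _ => congrArg Complex.normSq (SqS_apply G hdeg3 f e)
end Helpers5

section Helpers6
set_option linter.unusedSectionVars false
variable {V : Type*} [Fintype V] [DecidableEq V] (G : SimpleGraph V) [DecidableRel G.Adj]

lemma main_ineq (D : ℕ) (hdeg : ∀ x : V, 3 ≤ G.degree x ∧ G.degree x ≤ D) (f : V → ℂ) :
    (D : ℝ) ^ 2 * (∑ x : V, (G.degree x : ℝ) * Complex.normSq (lapP G f x))
      - (∑ e : G.Dart, Complex.normSq (((G.degree e.fst : ℂ) - 1)⁻¹ *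
          ((G.degree e.fst : ℂ) * lapP G f e.fst - f e.snd)))
      ≤ ((D : ℝ) ^ 2 - 1) * ∑ x : V, (G.degree x : ℝ) * Complex.normSq (f x) := by
  have hdeg3 : ∀ x, 3 ≤ G.degree x := fun x => (hdeg x).1
  have hN : (∑ e : G.Dart, Complex.normSq (((G.degree e.fst : ℂ) - 1)⁻¹ *
        ((G.degree e.fst : ℂ) * lapP G f e.fst - f e.snd)))
      = ∑ x : V, (((G.degree x : ℝ) - 1) * ((G.degree x : ℝ) - 1))⁻¹ *
          ((G.degree x : ℝ) ^ 3 * Complex.normSq (lapP G f x)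
            - 2 * (G.degree x : ℝ) ^ 2 * Complex.normSq (lapP G f x)
            + ∑ y ∈ G.neighborFinset x, Complex.normSq (f y)) := by
    rw [sum_dart_csg G (fun x y => Complex.normSq (((G.degree x : ℂ) - 1)⁻¹ *
        ((G.degree x : ℂ) * lapP G f x - f y)))]
    refine Finset.sum_congr rfl fun x _ => ?_
    rw [← inner_sum_normSq G hdeg3 f x, Finset.mul_sum]
    refine Finset.sum_congr rfl fun y _ => ?_
    rw [Complex.normSq_mul, Complex.normSq_inv]
    congr 2
    rw [show ((G.degree x : ℂ) - 1) = (((G.degree x : ℝ) - 1 : ℝ) : ℂ) by push_cast; ring,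
      Complex.normSq_ofReal]
  have hA : (∑ x : V, (G.degree x : ℝ) * Complex.normSq (f x))
      = ∑ x : V, ∑ y ∈ G.neighborFinset x, Complex.normSq (f y) := by
    rw [← Adart G f, sum_dart_csg G (fun _ y => Complex.normSq (f y))]
  rw [hN, hA, Finset.mul_sum, Finset.mul_sum, ← Finset.sum_sub_distrib]
  refine Finset.sum_le_sum fun x _ => ?_
  have hd3 : (3 : ℝ) ≤ (G.degree x : ℝ) := by exact_mod_cast hdeg3 x
  have hDx : ((G.degree x : ℝ)) ≤ (D : ℝ) := by exact_mod_cast (hdeg x).2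
  have hs : 0 ≤ ∑ y ∈ G.neighborFinset x, Complex.normSq (f y) :=
    Finset.sum_nonneg fun y _ => Complex.normSq_nonneg _
  have ha2 : 0 ≤ Complex.normSq (lapP G f x) := Complex.normSq_nonneg _
  have hd0 : (0 : ℝ) < (G.degree x : ℝ) := by linarith
  have hcs : (G.degree x : ℝ) * Complex.normSq (lapP G f x)
      ≤ ∑ y ∈ G.neighborFinset x, Complex.normSq (f y) := by
    have h1 := cs_bound G f x
    rw [← deg_mul_lapP G hdeg3 f x, Complex.normSq_mul, Complex.normSq_natCast] at h1
    refine le_of_mul_le_mul_left ?_ hd0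
    calc (G.degree x : ℝ) * ((G.degree x : ℝ) * Complex.normSq (lapP G f x))
        = (G.degree x : ℝ) * (G.degree x : ℝ) * Complex.normSq (lapP G f x) := by ring
      _ ≤ (G.degree x : ℝ) * ∑ y ∈ G.neighborFinset x, Complex.normSq (f y) := h1
  exact key_real (G.degree x : ℝ) (D : ℝ) _ _ hd3 hDx ha2 hs hcs
end Helpers6

/-- converse spectral gap implication: for `3 ≤ D(x) ≤ D`,
(a) for every `f` with `∑ f(x)D(x) = 0`, taking `G(e) = f(t(e))` one has
`⟨G, (I - S*²S²) G⟩_{ℓ²(B,U)} ≤ D² ⟨f, (I - P²) f⟩_{ℓ²(V,π)}`; consequently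
(b) if the spectrum of `S*²S²` on `ℓ²ₒ(B,U)` is contained in `[0, 1-c]`, then
the spectrum of `P²` on `ℓ²ₒ(V,π)` is contained in `[0, 1 - D⁻²c]` (both
spectral inclusions expressed by the equivalent quadratic-form bounds). -/
theorem converse_spectral_gap {V : Type*} [Fintype V] [DecidableEq V]
    (G : SimpleGraph V) [DecidableRel G.Adj]
    (hconn : G.Connected) (hnb : ¬ G.Colorable 2)
    (D : ℕ) (hdeg : ∀ x : V, 3 ≤ G.degree x ∧ G.degree x ≤ D) :
    (∀ f : V → ℂ, (∑ x : V, f x * (G.degree x : ℂ)) = 0 →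
      (∑ e : G.Dart, (starRingEnd ℂ) (f e.snd) *
          (f e.snd - ∑ e' : G.Dart, (SstarSqSq G e e' : ℂ) * f e'.snd)).re ≤
        (D : ℝ) ^ 2 * (∑ x : V, (starRingEnd ℂ) (f x) *
          (f x - lapP G (lapP G f) x) * (G.degree x : ℂ)).re) ∧
    (∀ c : ℝ,
      (∀ φ : G.Dart → ℂ, (∑ e : G.Dart, φ e) = 0 →
        0 ≤ (∑ e : G.Dart, (starRingEnd ℂ) (φ e) *
              ∑ e' : G.Dart, (SstarSqSq G e e' : ℂ) * φ e').re ∧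
        (∑ e : G.Dart, (starRingEnd ℂ) (φ e) *
              ∑ e' : G.Dart, (SstarSqSq G e e' : ℂ) * φ e').re ≤
          (1 - c) * ∑ e : G.Dart, ‖φ e‖ ^ 2) →
      ∀ f : V → ℂ, (∑ x : V, f x * (G.degree x : ℂ)) = 0 →
        0 ≤ (∑ x : V, (starRingEnd ℂ) (f x) * lapP G (lapP G f) x * (G.degree x : ℂ)).re ∧
        (∑ x : V, (starRingEnd ℂ) (f x) * lapP G (lapP G f) x * (G.degree x : ℂ)).re ≤
          (1 - c / (D : ℝ) ^ 2) * ∑ x : V, ‖f x‖ ^ 2 * (G.degree x : ℝ)) := by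
  have hdeg3 : ∀ x, 3 ≤ G.degree x := fun x => (hdeg x).1
  have hV : Nonempty V := hconn.nonempty
  obtain ⟨x0⟩ := hV
  have hD3 : 3 ≤ D := le_trans (hdeg x0).1 (hdeg x0).2
  have hD2 : (0 : ℝ) < (D : ℝ) ^ 2 := by
    have : (0 : ℝ) < (D : ℝ) := by exact_mod_cast (by omega : 0 < D)
    positivity
  constructor
  · intro f _
    have hL : (∑ e : G.Dart, (starRingEnd ℂ) (f e.snd) *
          (f e.snd - ∑ e' : G.Dart, (SstarSqSq G e e' : ℂ) * f e'.snd)).re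
        = (∑ x : V, (G.degree x : ℝ) * Complex.normSq (f x))
          - ∑ e : G.Dart, Complex.normSq (((G.degree e.fst : ℂ) - 1)⁻¹ *
              ((G.degree e.fst : ℂ) * lapP G f e.fst - f e.snd)) := by
      have hsplit : ∑ e : G.Dart, (starRingEnd ℂ) (f e.snd) *
            (f e.snd - ∑ e' : G.Dart, (SstarSqSq G e e' : ℂ) * f e'.snd)
          = (∑ e : G.Dart, (starRingEnd ℂ) (f e.snd) * f e.snd)
            - ∑ e : G.Dart, (starRingEnd ℂ) (f e.snd) *
                ∑ e' : G.Dart, (SstarSqSq G e e' : ℂ) * f e'.snd := by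
        rw [← Finset.sum_sub_distrib]
        exact Finset.sum_congr rfl fun e _ => mul_sub _ _ _
      rw [hsplit, Complex.sub_re, Nsum G hdeg3 f]
      congr 1
      rw [Complex.re_sum, ← Adart G f]
      exact Finset.sum_congr rfl fun e _ => conj_mul_self_re _
    have hR : (∑ x : V, (starRingEnd ℂ) (f x) * (f x - lapP G (lapP G f) x) * (G.degree x : ℂ)).re
        = (∑ x : V, (G.degree x : ℝ) * Complex.normSq (f x))
          - ∑ x : V, (G.degree x : ℝ) * Complex.normSq (lapP G f x) := by
      have hsplit : ∑ x : V, (starRingEnd ℂ) (f x) * (f x - lapP G (lapP G f) x) * (G.degree x : ℂ)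
          = (∑ x : V, (starRingEnd ℂ) (f x) * f x * (G.degree x : ℂ))
            - ∑ x : V, (starRingEnd ℂ) (f x) * lapP G (lapP G f) x * (G.degree x : ℂ) := by
        rw [← Finset.sum_sub_distrib]
        exact Finset.sum_congr rfl fun x _ => by ring
      rw [hsplit, Complex.sub_re, Asum G f, Bsum G hdeg3 f]
    rw [hL, hR]
    have hmain := main_ineq G D hdeg f
    linarith
  · intro c hc f hf0
    have hB := Bsum G hdeg3 f
    constructor
    · rw [hB]
      exact Finset.sum_nonneg fun x _ =>
        mul_nonneg (Nat.cast_nonneg _) (Complex.normSq_nonneg _)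
    · have hsum0 : ∑ e : G.Dart, f e.snd = 0 := by
        rw [sum_dart_head G f, show ∑ x : V, (G.degree x) • f x = ∑ x : V, f x * (G.degree x : ℂ)
          from Finset.sum_congr rfl fun x _ => by rw [nsmul_eq_mul, mul_comm]]
        exact hf0
      obtain ⟨-, h2⟩ := hc (fun e => f e.snd) hsum0
      rw [Nsum G hdeg3 f] at h2
      have hnorm : ∑ e : G.Dart, ‖f e.snd‖ ^ 2
          = ∑ x : V, (G.degree x : ℝ) * Complex.normSq (f x) := by
        rw [← Adart G f]
        exact Finset.sum_congr rfl fun e _ => norm_sq_eq_normSq _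
      rw [hnorm] at h2
      have hmain := main_ineq G D hdeg f
      have hgoalA : ∑ x : V, ‖f x‖ ^ 2 * (G.degree x : ℝ)
          = ∑ x : V, (G.degree x : ℝ) * Complex.normSq (f x) :=
        Finset.sum_congr rfl fun x _ => by rw [norm_sq_eq_normSq, mul_comm]
      rw [hB, hgoalA]
      have hfin : (D : ℝ) ^ 2 * (∑ x : V, (G.degree x : ℝ) * Complex.normSq (lapP G f x))
          ≤ ((D : ℝ) ^ 2 - c) * ∑ x : V, (G.degree x : ℝ) * Complex.normSq (f x) := by
        linarith
      calc (∑ x : V, (G.degree x : ℝ) * Complex.normSq (lapP G f x))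
          = ((D : ℝ) ^ 2 * ∑ x : V, (G.degree x : ℝ) * Complex.normSq (lapP G f x))
              / (D : ℝ) ^ 2 := by
            rw [mul_div_cancel_left₀ _ (ne_of_gt hD2)]
        _ ≤ (((D : ℝ) ^ 2 - c) * ∑ x : V, (G.degree x : ℝ) * Complex.normSq (f x))
              / (D : ℝ) ^ 2 := by
            apply div_le_div_of_nonneg_right hfin hD2.le
        _ = (1 - c / (D : ℝ) ^ 2) * ∑ x : V, (G.degree x : ℝ) * Complex.normSq (f x) := by
            field_simp
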